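/- Let Q = k[x_1,...,x_n, y_{i,j}, z] be a polynomial ring over a field, let I = (z x_1, ..., z x_n) and let J be generated by monomials of the form x_i y_{i,j} (with at least one generator). Then the ideal quotient (I : J) equals the principal ideal (z). -/

import Mathlib

/-- Variables of the polynomial ring `Q = k[z, x_1,…,x_n, y_{i,j}]`. -/
inductive TreeVar (n : ℕ) (a : Fin n → ℕ) : Type
  | z : TreeVar n a
  | x : Fin n → TreeVar n a
  | y : (i : Fin n) → Fin (a i) → TreeVar n a

open MvPolynomial


open MvPolynomial in
lemma primeX_aux {σ : Type*} {k : Type*} [Field k] (v : σ) :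
    Prime (MvPolynomial.X v : MvPolynomial σ k) := by
  classical
  let e : σ ≃ Option {b : σ // b ≠ v} := (Equiv.optionSubtypeNe v).symm
  let f : MvPolynomial σ k ≃* Polynomial (MvPolynomial {b : σ // b ≠ v} k) :=
    ((renameEquiv k e).trans (optionEquivLeft k _)).toMulEquiv
  rw [← MulEquiv.prime_iff f]
  have : f (X v) = Polynomial.X := by
    show ((renameEquiv k e).trans (optionEquivLeft k _)) (X v) = Polynomial.X
    rw [AlgEquiv.trans_apply, renameEquiv_apply, rename_X,
      show e v = none by simp [e], optionEquivLeft_X_none]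
  rw [this]
  exact Polynomial.prime_X

/-- with `I = (z x_1, …, z x_n)` and `J = (x_i y_{i,j})` (nonempty),
the ideal quotient `(I : J)` equals `(z)`. -/
theorem stmt0 {k : Type*} [Field k] (n : ℕ) (hn : 0 < n) (a : Fin n → ℕ)
    (hne : ∃ i, 0 < a i)
    (I J : Ideal (MvPolynomial (TreeVar n a) k))
    (hI : I = Ideal.span (Set.range fun i : Fin n =>
      X (TreeVar.z : TreeVar n a) * X (TreeVar.x i)))
    (hJ : J = Ideal.span {p | ∃ (i : Fin n) (j : Fin (a i)),
      p = X (TreeVar.x i : TreeVar n a) * X (TreeVar.y i j)}) :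
    Submodule.colon I J = Ideal.span {X (TreeVar.z : TreeVar n a)} := by
  obtain ⟨i0, hi0⟩ := hne
  apply le_antisymm
  · intro q hq
    have hp : X (TreeVar.x i0 : TreeVar n a) * X (TreeVar.y i0 ⟨0, hi0⟩) ∈ J := by
      rw [hJ]; exact Ideal.subset_span ⟨i0, ⟨0, hi0⟩, rfl⟩
    have hmem := Submodule.mem_colon.mp hq _ hp
    rw [hI, smul_eq_mul] at hmem
    have hIz : Ideal.span (Set.range fun i : Fin n =>
        (X (TreeVar.z : TreeVar n a) : MvPolynomial (TreeVar n a) k) * X (TreeVar.x i)) ≤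
        Ideal.span {X (TreeVar.z : TreeVar n a)} := by
      rw [Ideal.span_le]
      rintro _ ⟨i, rfl⟩
      exact Ideal.mem_span_singleton.mpr ⟨X (TreeVar.x i), rfl⟩
    have hz := Ideal.mem_span_singleton.mp (hIz hmem)
    have hprime : Prime (X (TreeVar.z : TreeVar n a) : MvPolynomial (TreeVar n a) k) :=
      primeX_aux _
    rw [Ideal.mem_span_singleton]
    rcases hprime.dvd_mul.mp hz with h | h
    · exact h
    rcases hprime.dvd_mul.mp h with h | h <;> rw [X_dvd_X] at h <;> exact absurd h (by simp)
  · rw [Ideal.span_le]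
    rintro q hq
    simp only [Set.mem_singleton_iff] at hq
    subst hq
    rw [SetLike.mem_coe, Submodule.mem_colon]
    intro p hp
    rw [hJ] at hp
    refine Submodule.span_induction ?_ ?_ ?_ ?_ hp
    · rintro _ ⟨i, j, rfl⟩
      rw [smul_eq_mul, show X (TreeVar.z : TreeVar n a) * (X (TreeVar.x i) * X (TreeVar.y i j))
        = (X TreeVar.z * X (TreeVar.x i)) * X (TreeVar.y i j) by ring, hI]
      exact Ideal.mul_mem_right _ _ (Ideal.subset_span ⟨i, rfl⟩)
    · simp
    · intro x y _ _ hx hy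
      rw [smul_add]; exact add_mem hx hy
    · intro r x _ hx
      rw [smul_comm]; exact Submodule.smul_mem _ _ hx
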